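/- A ring R is uniquely π-clean with nil Jacobson radical if and only if R is an abelian periodic ring. -/

import Mathlib

/-- An element `a` is uniquely clean if it can be uniquely written as the
sum of an idempotent and a unit. -/
def UniquelyCleanElem {R : Type*} [Ring R] (a : R) : Prop :=
  ∃! e : R, IsIdempotentElem e ∧ IsUnit (a - e)

/-- A ring is uniquely π-clean if some power of every element is uniquely clean. -/
def UniquelyPiClean (R : Type*) [Ring R] : Prop :=
  ∀ a : R, ∃ n : ℕ, 1 ≤ n ∧ UniquelyCleanElem (a ^ n)

/-- A ring is abelian if every idempotent is central. -/
def AbelianRing (R : Type*) [Ring R] : Prop :=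
  ∀ e : R, IsIdempotentElem e → ∀ x : R, e * x = x * e


/-- A ring is periodic if for every a there exist distinct positive
integers m, n with a^m = a^n. -/
def PeriodicRing (R : Type*) [Ring R] : Prop :=
  ∀ a : R, ∃ m n : ℕ, 1 ≤ m ∧ 1 ≤ n ∧ m ≠ n ∧ a ^ m = a ^ n

section Part2
variable {R : Type*} [Ring R]

lemma unit_mem_max_false {M : Ideal R} (hM : M.IsMaximal) {v : R} (hv : IsUnit v)
    (hvM : v ∈ M) : False :=
  hM.ne_top (M.eq_top_of_isUnit_mem hvM hv)

lemma central_idem_mem {M : Ideal R} (hM : M.IsMaximal) {f : R} (hf : IsIdempotentElem f)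
    (hfc : ∀ x, f * x = x * f) : f ∈ M ∨ 1 - f ∈ M := by
  by_cases h : f ∈ M
  · exact Or.inl h
  · right
    obtain ⟨y, i, hiM, hyi⟩ := hM.exists_inv h
    have hf0 : f * (1 - f) = 0 := by rw [mul_sub, mul_one, hf, sub_self]
    have key : 1 - f = y * (f * (1 - f)) + (1 - f) * i := by
      have h1 : (y * f + i) * (1 - f) = 1 - f := by rw [hyi, one_mul]
      have h2 : i * (1 - f) = (1 - f) * i := by
        rw [mul_sub, sub_mul, mul_one, one_mul, hfc i]
      calc 1 - f = (y * f + i) * (1 - f) := h1.symm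
        _ = y * (f * (1 - f)) + i * (1 - f) := by noncomm_ring
        _ = y * (f * (1 - f)) + (1 - f) * i := by rw [h2]
    rw [hf0, mul_zero, zero_add] at key
    rw [key]
    exact M.mul_mem_left _ hiM

lemma corner_inv {y f p : R} (hp : IsIdempotentElem p) (hpc : ∀ w, p * w = w * p)
    (hfc : ∀ w, f * w = w * f) (hfp : f * p = 0)
    (t : ℕ) (ht : 1 ≤ t) (V : Rˣ) (hV : (V : R) = y ^ t - f) :
    ∃ g : R, g * (y * p) = p ∧ g * p = g := by
  have hyV : Commute y (V : R) := by
    rw [hV]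
    exact ((Commute.refl y).pow_right t).sub_right ((hfc y).symm)
  have hyVi : Commute y ((V⁻¹ : Rˣ) : R) := hyV.units_inv_right
  have hyt : y ^ t = (V : R) + f := eq_add_of_sub_eq hV.symm
  set vi : R := ((V⁻¹ : Rˣ) : R) with hvi
  have hcom : y * vi = vi * y := hyVi.eq
  have hVvi : (V : R) * vi = 1 := V.mul_inv
  refine ⟨y ^ (t - 1) * vi * p, ?_, ?_⟩
  · have hpy : p * (y * p) = y * p := by
      rw [← mul_assoc, hpc y, mul_assoc, hp]
    have hpow : y ^ (t - 1) * y = y ^ t := by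
      rw [← pow_succ]; congr 1; omega
    calc y ^ (t - 1) * vi * p * (y * p)
        = (y ^ (t - 1) * vi) * (p * (y * p)) := by simp only [mul_assoc]
      _ = (y ^ (t - 1) * vi) * (y * p) := by rw [hpy]
      _ = y ^ (t - 1) * ((vi * y) * p) := by simp only [mul_assoc]
      _ = y ^ (t - 1) * ((y * vi) * p) := by rw [← hcom]
      _ = (y ^ (t - 1) * y) * (vi * p) := by simp only [mul_assoc]
      _ = y ^ t * (vi * p) := by rw [hpow]
      _ = ((V : R) + f) * (vi * p) := by rw [hyt]
      _ = (V : R) * (vi * p) + f * (vi * p) := by rw [add_mul]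
      _ = ((V : R) * vi) * p + f * (vi * p) := by simp only [mul_assoc]
      _ = p + f * (vi * p) := by rw [hVvi, one_mul]
      _ = p + f * (p * vi) := by rw [← hpc vi]
      _ = p + (f * p) * vi := by simp only [mul_assoc]
      _ = p := by rw [hfp, zero_mul, add_zero]
  · rw [mul_assoc, hp]

lemma corner_df (hab : AbelianRing R) {p x' r g : R} (hp : IsIdempotentElem p)
    (hpc : ∀ w, p * w = w * p) (hg1 : g * ((r * x') * p) = p) :
    ∃ l : R, l * p = l ∧ l * (x' * p) = p ∧ (x' * p) * l = p := by
  set l : R := g * (p * r * p) with hldef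
  have hpxp : p * (x' * p) = x' * p := by
    rw [← mul_assoc, hpc x', mul_assoc, hp]
  have hl1 : l * (x' * p) = p := by
    have e1 : (p * r * p) * (x' * p) = (r * x') * p := by
      calc (p * r * p) * (x' * p)
          = (p * r) * (p * (x' * p)) := by simp only [mul_assoc]
        _ = (p * r) * (x' * p) := by rw [hpxp]
        _ = p * ((r * x') * p) := by simp only [mul_assoc]
        _ = ((r * x') * p) * p := by rw [hpc ((r * x') * p)]
        _ = (r * x') * (p * p) := by simp only [mul_assoc]
        _ = (r * x') * p := by rw [hp]
    rw [hldef, mul_assoc, e1, hg1]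
  have hlp : l * p = l := by
    rw [hldef]
    simp only [mul_assoc]
    rw [hp]
  have hpl : p * l = l := by rw [hpc l, hlp]
  set θ : R := (x' * p) * l with hθdef
  have hθi : IsIdempotentElem θ := by
    show θ * θ = θ
    calc ((x' * p) * l) * ((x' * p) * l)
        = (x' * p) * ((l * (x' * p)) * l) := by simp only [mul_assoc]
      _ = (x' * p) * (p * l) := by rw [hl1]
      _ = (x' * p) * l := by rw [hpl]
  have hθc : ∀ w, θ * w = w * θ := hab θ hθi
  have hθx : θ * (x' * p) = x' * p := by
    calc ((x' * p) * l) * (x' * p)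
        = (x' * p) * (l * (x' * p)) := by simp only [mul_assoc]
      _ = (x' * p) * p := by rw [hl1]
      _ = x' * (p * p) := by simp only [mul_assoc]
      _ = x' * p := by rw [hp]
  have hθp2 : θ * p = θ := by
    rw [hθdef]
    simp only [mul_assoc]
    rw [hlp]
  have key : p - θ = 0 := by
    have e2 : (p - θ) * (x' * p) = 0 := by
      rw [sub_mul, hpxp, hθx, sub_self]
    have e3 : (p - θ) * l = l * (p - θ) := by
      rw [sub_mul, mul_sub, hpl, hlp, hθc l]
    calc p - θ = (p - θ) * p := by rw [sub_mul, hp, hθp2]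
      _ = (p - θ) * (l * (x' * p)) := by rw [hl1]
      _ = ((p - θ) * l) * (x' * p) := by simp only [mul_assoc]
      _ = (l * (p - θ)) * (x' * p) := by rw [e3]
      _ = l * ((p - θ) * (x' * p)) := by simp only [mul_assoc]
      _ = 0 := by rw [e2, mul_zero]
  have hθp : (x' * p) * l = p := by
    have h0 := sub_eq_zero.mp key
    rw [hθdef] at h0
    exact h0.symm
  exact ⟨l, hlp, hl1, hθp⟩

lemma isUnit_tri {p₁ p₂ p₃ B c₁ c₂ c₃ : R}
    (hc1 : ∀ x, p₁ * x = x * p₁) (hc2 : ∀ x, p₂ * x = x * p₂) (hc3 : ∀ x, p₃ * x = x * p₃)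
    (hsum : p₁ + p₂ + p₃ = 1)
    (h₁ : B * c₁ * p₁ = p₁) (h₁' : c₁ * B * p₁ = p₁)
    (h₂ : B * c₂ * p₂ = p₂) (h₂' : c₂ * B * p₂ = p₂)
    (h₃ : B * c₃ * p₃ = p₃) (h₃' : c₃ * B * p₃ = p₃) : IsUnit B := by
  refine ⟨⟨B, c₁ * p₁ + c₂ * p₂ + c₃ * p₃, ?_, ?_⟩, rfl⟩
  · show B * (c₁ * p₁ + c₂ * p₂ + c₃ * p₃) = 1
    rw [mul_add, mul_add, ← mul_assoc, ← mul_assoc, ← mul_assoc, h₁, h₂, h₃, hsum]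
  · show (c₁ * p₁ + c₂ * p₂ + c₃ * p₃) * B = 1
    have e1 : c₁ * p₁ * B = p₁ := by rw [mul_assoc, hc1 B, ← mul_assoc, h₁']
    have e2 : c₂ * p₂ * B = p₂ := by rw [mul_assoc, hc2 B, ← mul_assoc, h₂']
    have e3 : c₃ * p₃ * B = p₃ := by rw [mul_assoc, hc3 B, ← mul_assoc, h₃']
    rw [add_mul, add_mul, e1, e2, e3, hsum]



lemma lemZ_caseA (hab : AbelianRing R) (hupc : UniquelyPiClean R)
    {b e : R} (he : IsIdempotentElem e) (hu : IsUnit (b - e))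
    (huniq : ∀ h : R, IsIdempotentElem h → IsUnit (b - h) → h = e)
    {M : Ideal R} (hM : M.IsMaximal) (heM : e ∈ M) : b - b * b ∈ M := by
  have hec : ∀ w, e * w = w * e := hab e he
  set x : R := (1 - b) * (1 - e) with hxdef
  suffices hxM : x ∈ M by
    have h1 : b - b * b = (b - b * b) * e + b * x := by rw [hxdef]; noncomm_ring
    rw [h1]
    exact add_mem (M.mul_mem_left _ heM) (M.mul_mem_left _ hxM)
  by_contra hxM
  obtain ⟨r, i, hiM, hyi⟩ := hM.exists_inv hxM
  set y : R := r * x with hydef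
  have h1y : 1 - y ∈ M := by
    have h0 : 1 - y = i := by rw [hydef, ← hyi]; noncomm_ring
    rw [h0]; exact hiM
  obtain ⟨t, ht, hUC⟩ := hupc y
  obtain ⟨f, ⟨hf, hfu⟩, -⟩ := hUC
  have hfc : ∀ w, f * w = w * f := hab f hf
  obtain ⟨V, hV⟩ := hfu
  rcases central_idem_mem hM hf hfc with hfM | hfM
  · -- main case : f ∈ M
    set p : R := (1 - e) * (1 - f) with hpdef
    have h1ec : ∀ w, (1 - e) * w = w * (1 - e) := fun w => by
      rw [sub_mul, mul_sub, one_mul, mul_one, hec w]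
    have h1fc : ∀ w, (1 - f) * w = w * (1 - f) := fun w => by
      rw [sub_mul, mul_sub, one_mul, mul_one, hfc w]
    have hpc : ∀ w, p * w = w * p := fun w => by
      rw [hpdef, mul_assoc, h1fc w, ← mul_assoc, h1ec w, mul_assoc]
    have hpi : IsIdempotentElem p :=
      IsIdempotentElem.mul_of_commute (h1ec (1 - f)) he.one_sub hf.one_sub
    have hfp : f * p = 0 := by
      calc f * p = (f * (1 - e)) * (1 - f) := by rw [hpdef, ← mul_assoc]
        _ = ((1 - e) * f) * (1 - f) := by rw [h1ec f]
        _ = (1 - e) * (f * (1 - f)) := by rw [mul_assoc]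
        _ = 0 := by rw [mul_sub, mul_one, hf, sub_self, mul_zero]
    obtain ⟨g, hg1, hgp⟩ := corner_inv hpi hpc hfc hfp t ht V hV
    have hg1' : g * ((r * x) * p) = p := by rw [← hydef]; exact hg1
    obtain ⟨l, hlp, hl1, hl2⟩ := corner_df hab hpi hpc hg1'
    have he1 : e * (1 - e) = 0 := by rw [mul_sub, mul_one, he, sub_self]
    have hep : e * p = 0 := by
      calc e * p = (e * (1 - e)) * (1 - f) := by rw [hpdef, ← mul_assoc]
        _ = 0 := by rw [he1, zero_mul]
    have hpe : p * e = 0 := by rw [hpc e]; exact hep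
    have hhi : IsIdempotentElem (e + p) := by
      show (e + p) * (e + p) = e + p
      rw [add_mul, mul_add, mul_add, he, hpi, hep, hpe, add_zero, zero_add]
    obtain ⟨U, hU⟩ := hu
    set ui : R := ((U⁻¹ : Rˣ) : R) with huidef
    have hbeU : (b - e) * ui = 1 := by rw [huidef, ← hU]; exact U.mul_inv
    have hUbe : ui * (b - e) = 1 := by rw [huidef, ← hU]; exact U.inv_mul
    set P3 : R := (1 - e) * f with hP3def
    have hP3c : ∀ w, P3 * w = w * P3 := fun w => by
      rw [hP3def, mul_assoc, hfc w, ← mul_assoc, h1ec w, mul_assoc]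
    have hsum : e + p + P3 = 1 := by rw [hpdef, hP3def]; noncomm_ring
    set B : R := b - (e + p) with hBdef
    have hBsplit : B = (b - e) - p := by rw [hBdef]; noncomm_ring
    have hpP3 : p * P3 = 0 := by
      have hpf : p * f = 0 := by rw [hpc f]; exact hfp
      calc p * P3 = (p * (1 - e)) * f := by rw [hP3def, ← mul_assoc]
        _ = ((1 - e) * p) * f := by rw [← h1ec p]
        _ = (1 - e) * (p * f) := by rw [mul_assoc]
        _ = 0 := by rw [hpf, mul_zero]
    have h1ep : (1 - e) * p = p := by
      calc (1 - e) * p = ((1 - e) * (1 - e)) * (1 - f) := by rw [hpdef, ← mul_assoc]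
        _ = (1 - e) * (1 - f) := by rw [he.one_sub]
        _ = p := by rw [hpdef]
    have hxp : x * p = (1 - b) * p := by
      rw [hxdef, mul_assoc, h1ep]
    have hBp : B * p = -(x * p) := by
      have h0 : B * p = (b - e) * p - p * p := by rw [hBsplit, sub_mul]
      rw [h0, hpi, sub_mul, hep, sub_zero, hxp]
      noncomm_ring
    have hBU : B * ui = 1 - p * ui := by
      rw [hBsplit, sub_mul, hbeU]
    have hUB : ui * B = 1 - ui * p := by
      rw [hBsplit, mul_sub, hUbe]
    have hc1 : B * ui * e = e := by
      rw [hBU, sub_mul, one_mul]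
      have hz : p * ui * e = 0 := by rw [hpc ui, mul_assoc, hpe, mul_zero]
      rw [hz, sub_zero]
    have hc1' : ui * B * e = e := by
      rw [hUB, sub_mul, one_mul, mul_assoc, hpe, mul_zero, sub_zero]
    have hpl : p * l = l := by rw [hpc l, hlp]
    have hBl : B * l = -p := by
      calc B * l = B * (p * l) := by rw [hpl]
        _ = (B * p) * l := by rw [← mul_assoc]
        _ = -((x * p) * l) := by rw [hBp, neg_mul]
        _ = -p := by rw [hl2]
    have hc2 : B * (-l) * p = p := by
      calc B * (-l) * p = (-(B * l)) * p := by rw [mul_neg]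
        _ = p * p := by rw [hBl, neg_neg]
        _ = p := hpi
    have hc2' : (-l) * B * p = p := by
      have e2 : l * (B * p) = -p := by rw [hBp, mul_neg, hl1]
      calc (-l) * B * p = -(l * (B * p)) := by simp only [neg_mul, mul_assoc]
        _ = p := by rw [e2, neg_neg]
    have hc3 : B * ui * P3 = P3 := by
      rw [hBU, sub_mul, one_mul]
      have hz : p * ui * P3 = 0 := by rw [hpc ui, mul_assoc, hpP3, mul_zero]
      rw [hz, sub_zero]
    have hc3' : ui * B * P3 = P3 := by
      rw [hUB, sub_mul, one_mul, mul_assoc, hpP3, mul_zero, sub_zero]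
    have hBu : IsUnit B := isUnit_tri hec hpc hP3c hsum hc1 hc1' hc2 hc2' hc3 hc3'
    have hBu' : IsUnit (b - (e + p)) := by rw [← hBdef]; exact hBu
    have hhe : e + p = e := huniq (e + p) hhi hBu'
    have hp0 : p = 0 := by
      have h0 : e + p - e = e - e := by rw [hhe]
      simpa using h0
    have h1e : (1 : R) - e ∈ M := by
      have hpz : (1 - e) * (1 - f) = 0 := by rw [← hpdef]; exact hp0
      have hexp : (1 - e) * (1 - f) = (1 - e) - (1 - e) * f := by noncomm_ring
      have h0 : (1 : R) - e = (1 - e) * f := by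
        rw [hexp] at hpz
        exact sub_eq_zero.mp hpz
      rw [h0]
      exact M.mul_mem_left _ hfM
    have hone : (1 : R) ∈ M := by
      have h0 := add_mem h1e heM
      simpa using h0
    exact hM.ne_top ((Ideal.eq_top_iff_one M).mpr hone)
  · -- f ∉ M impossible: V ∈ M is a unit
    have hy1 : y - 1 ∈ M := by
      have h0 := neg_mem h1y; rwa [neg_sub] at h0
    have hyt1 : y ^ t - 1 ∈ M := by
      rw [← geom_sum_mul y t]
      exact M.mul_mem_left _ hy1
    have hVM : (V : R) ∈ M := by
      rw [hV]
      have h0 : y ^ t - f = (y ^ t - 1) + (1 - f) := by noncomm_ring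
      rw [h0]
      exact add_mem hyt1 hfM
    exact unit_mem_max_false hM V.isUnit hVM

lemma lemZ (hab : AbelianRing R) (hupc : UniquelyPiClean R)
    {b e : R} (he : IsIdempotentElem e) (hu : IsUnit (b - e))
    (huniq : ∀ h : R, IsIdempotentElem h → IsUnit (b - h) → h = e)
    {M : Ideal R} (hM : M.IsMaximal) : b - b * b ∈ M := by
  rcases central_idem_mem hM he (hab e he) with heM | heM
  · exact lemZ_caseA hab hupc he hu huniq hM heM
  · have he' : IsIdempotentElem (1 - e) := he.one_sub
    have hu' : IsUnit ((1 - b) - (1 - e)) := by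
      have h0 : (1 - b) - (1 - e) = -(b - e) := by noncomm_ring
      rw [h0]; exact hu.neg
    have huniq' : ∀ h : R, IsIdempotentElem h → IsUnit ((1 - b) - h) → h = 1 - e := by
      intro h hh hhu
      have h2 : IsUnit (b - (1 - h)) := by
        have h0 : b - (1 - h) = -((1 - b) - h) := by noncomm_ring
        rw [h0]; exact hhu.neg
      have h3 := huniq (1 - h) hh.one_sub h2
      rw [← h3, sub_sub_cancel]
    have key := lemZ_caseA hab hupc he' hu' huniq' hM heM
    have h0 : b - b * b = (1 - b) - (1 - b) * (1 - b) := by noncomm_ring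
    rw [h0]; exact key


lemma jac_left_inv {y : R} (hy : y ∈ (⊥ : Ideal R).jacobson) : ∃ z : R, z * (1 - y) = 1 := by
  by_cases h : Ideal.span {1 - y} = ⊤
  · have h1 : (1 : R) ∈ Ideal.span {1 - y} := h ▸ Submodule.mem_top
    obtain ⟨z, hz⟩ := Submodule.mem_span_singleton.mp h1
    exact ⟨z, by rwa [smul_eq_mul] at hz⟩
  · exfalso
    obtain ⟨M, hM, hle⟩ := Ideal.exists_le_maximal _ h
    have h1 : 1 - y ∈ M := hle (Ideal.subset_span rfl)
    have h2 : y ∈ M := Ideal.mem_sInf.mp hy ⟨bot_le, hM⟩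
    have h3 : (1 : R) ∈ M := by
      have := add_mem h1 h2; simpa using this
    exact hM.ne_top ((Ideal.eq_top_iff_one M).mpr h3)

lemma jac_unit {y : R} (hy : y ∈ (⊥ : Ideal R).jacobson) : IsUnit (1 - y) := by
  obtain ⟨z, hz⟩ := jac_left_inv hy
  have hz0 : z - z * y = 1 := by rw [← hz]; noncomm_ring
  have hz' : z = 1 + z * y := by
    exact eq_add_of_sub_eq hz0
  have hzy : z * y ∈ (⊥ : Ideal R).jacobson := Ideal.mul_mem_left _ z hy
  obtain ⟨w, hw⟩ := jac_left_inv (neg_mem hzy)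
  rw [sub_neg_eq_add] at hw
  have hwz : w * z = 1 := by rw [hz']; exact hw
  have h1 : w = 1 - y := by
    calc w = w * (z * (1 - y)) := by rw [hz, mul_one]
      _ = (w * z) * (1 - y) := by rw [mul_assoc]
      _ = 1 - y := by rw [hwz, one_mul]
  have hzu : (1 - y) * z = 1 := by rw [← h1]; exact hwz
  exact ⟨⟨1 - y, z, hzu, hz⟩, rfl⟩


lemma idem_pow {e : R} (he : IsIdempotentElem e) : ∀ t : ℕ, 1 ≤ t → e ^ t = e := by
  intro t ht
  induction t with
  | zero => omega
  | succ n ih =>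
    rcases Nat.eq_or_lt_of_le ht with h | h
    · rw [← h, pow_one]
    · have hn : 1 ≤ n := by omega
      rw [pow_succ, ih hn, he]

lemma isUnit_of_left_right {A L Rv : R} (hL : L * A = 1) (hR : A * Rv = 1) : IsUnit A := by
  have hLR : L = Rv := by
    calc L = L * (A * Rv) := by rw [hR, mul_one]
      _ = (L * A) * Rv := by rw [mul_assoc]
      _ = Rv := by rw [hL, one_mul]
  exact ⟨⟨A, Rv, hR, by rw [← hLR]; exact hL⟩, rfl⟩

lemma abelian_of_upc (hupc : UniquelyPiClean R) : AbelianRing R := by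
  intro e he x
  obtain ⟨n, hn, hUC⟩ := hupc e
  have hen : e ^ n = e := idem_pow he n hn
  rw [hen] at hUC
  obtain ⟨w, ⟨hw, hwu⟩, hwun⟩ := hUC
  have hs : (2 * e - 1) * (2 * e - 1) = 1 := by
    have h0 : (2 * e - 1) * (2 * e - 1) = 4 * (e * e) - 4 * e + 1 := by noncomm_ring
    rw [h0, he]; noncomm_ring
  have hsu : IsUnit (2 * e - 1) := ⟨⟨2 * e - 1, 2 * e - 1, hs, hs⟩, rfl⟩
  have hcand1 : (1 : R) - e = w := by
    refine hwun (1 - e) ⟨he.one_sub, ?_⟩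
    have h0 : e - (1 - e) = 2 * e - 1 := by noncomm_ring
    rw [h0]; exact hsu
  have he1 : (1 - e) * e = 0 := by rw [sub_mul, one_mul, he, sub_self]
  have he2 : e * (1 - e) = 0 := by rw [mul_sub, mul_one, he, sub_self]
  have key1 : e * x * (1 - e) = 0 := by
    set ν : R := e * x * (1 - e) with hν
    have hνν : ν * ν = 0 := by
      calc (e * x * (1 - e)) * (e * x * (1 - e))
          = e * (x * (((1 - e) * e) * (x * (1 - e)))) := by simp only [mul_assoc]
        _ = 0 := by rw [he1, zero_mul, mul_zero, mul_zero]
    have heν : e * ν = ν := by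
      calc e * (e * x * (1 - e)) = (e * e) * (x * (1 - e)) := by simp only [mul_assoc]
        _ = e * x * (1 - e) := by rw [he]; simp only [mul_assoc]
    have hνe : ν * e = 0 := by
      calc (e * x * (1 - e)) * e = e * (x * ((1 - e) * e)) := by simp only [mul_assoc]
        _ = 0 := by rw [he1, mul_zero, mul_zero]
    have hfi : IsIdempotentElem (e + ν) := by
      show (e + ν) * (e + ν) = e + ν
      rw [add_mul, mul_add, mul_add, he, heν, hνe, hνν, add_zero, add_zero]
    have hsν : (2 * e - 1) * ν = ν := by
      have h0 : (2 * e - 1) * ν = 2 * (e * ν) - ν := by noncomm_ring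
      rw [h0, heν]; noncomm_ring
    have hνs : ν * (2 * e - 1) = -ν := by
      have h0 : ν * (2 * e - 1) = 2 * (ν * e) - ν := by noncomm_ring
      rw [h0, hνe]; noncomm_ring
    have hA1 : ((2 * e - 1) + ν) * (2 * e - 1) = 1 - ν := by
      rw [add_mul, hs, hνs]; noncomm_ring
    have hA2 : (2 * e - 1) * ((2 * e - 1) + ν) = 1 + ν := by
      rw [mul_add, hs, hsν]
    have hmm : (1 - ν) * (1 + ν) = 1 := by
      have h0 : (1 - ν) * (1 + ν) = 1 + ν - ν - ν * ν := by noncomm_ring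
      rw [h0, hνν]; noncomm_ring
    have hR : ((2 * e - 1) + ν) * ((2 * e - 1) * (1 + ν)) = 1 := by
      rw [← mul_assoc, hA1, hmm]
    have hL : ((1 - ν) * (2 * e - 1)) * ((2 * e - 1) + ν) = 1 := by
      rw [mul_assoc, hA2, hmm]
    have hAu : IsUnit ((2 * e - 1) + ν) := isUnit_of_left_right hL hR
    have hcand2 : (1 : R) - (e + ν) = w := by
      refine hwun (1 - (e + ν)) ⟨hfi.one_sub, ?_⟩
      have hA : e - (1 - (e + ν)) = (2 * e - 1) + ν := by noncomm_ring
      rw [hA]; exact hAu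
    have hfe : (1 : R) - e = 1 - (e + ν) := by rw [hcand1, hcand2]
    have h1 : ν = (1 - e) - (1 - (e + ν)) := by noncomm_ring
    rw [h1, ← hfe, sub_self]
  have key2 : (1 - e) * x * e = 0 := by
    set μ : R := (1 - e) * x * e with hμ
    have hμμ : μ * μ = 0 := by
      calc ((1 - e) * x * e) * ((1 - e) * x * e)
          = (1 - e) * (x * ((e * (1 - e)) * (x * e))) := by simp only [mul_assoc]
        _ = 0 := by rw [he2, zero_mul, mul_zero, mul_zero]
    have heμ : e * μ = 0 := by
      calc e * ((1 - e) * x * e) = (e * (1 - e)) * (x * e) := by simp only [mul_assoc]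
        _ = 0 := by rw [he2, zero_mul]
    have hμe : μ * e = μ := by
      calc ((1 - e) * x * e) * e = (1 - e) * (x * (e * e)) := by simp only [mul_assoc]
        _ = (1 - e) * x * e := by rw [he]; simp only [mul_assoc]
    have hfi : IsIdempotentElem (e + μ) := by
      show (e + μ) * (e + μ) = e + μ
      rw [add_mul, mul_add, mul_add, he, heμ, hμe, hμμ, add_zero, add_zero]
    have hsμ : (2 * e - 1) * μ = -μ := by
      have h0 : (2 * e - 1) * μ = 2 * (e * μ) - μ := by noncomm_ring
      rw [h0, heμ]; noncomm_ring
    have hμs : μ * (2 * e - 1) = μ := by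
      have h0 : μ * (2 * e - 1) = 2 * (μ * e) - μ := by noncomm_ring
      rw [h0, hμe]; noncomm_ring
    have hA1 : ((2 * e - 1) + μ) * (2 * e - 1) = 1 + μ := by
      rw [add_mul, hs, hμs]
    have hA2 : (2 * e - 1) * ((2 * e - 1) + μ) = 1 - μ := by
      rw [mul_add, hs, hsμ]; noncomm_ring
    have hmm : (1 + μ) * (1 - μ) = 1 := by
      have h0 : (1 + μ) * (1 - μ) = 1 - μ + μ - μ * μ := by noncomm_ring
      rw [h0, hμμ]; noncomm_ring
    have hR : ((2 * e - 1) + μ) * ((2 * e - 1) * (1 - μ)) = 1 := by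
      rw [← mul_assoc, hA1, hmm]
    have hL : ((1 + μ) * (2 * e - 1)) * ((2 * e - 1) + μ) = 1 := by
      rw [mul_assoc, hA2, hmm]
    have hAu : IsUnit ((2 * e - 1) + μ) := isUnit_of_left_right hL hR
    have hcand2 : (1 : R) - (e + μ) = w := by
      refine hwun (1 - (e + μ)) ⟨hfi.one_sub, ?_⟩
      have hA : e - (1 - (e + μ)) = (2 * e - 1) + μ := by noncomm_ring
      rw [hA]; exact hAu
    have hfe : (1 : R) - e = 1 - (e + μ) := by rw [hcand1, hcand2]
    have h1 : μ = (1 - e) - (1 - (e + μ)) := by noncomm_ring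
    rw [h1, ← hfe, sub_self]
  have h1 : e * x = e * x * e := by
    have h0 : e * x * (1 - e) = e * x - e * x * e := by noncomm_ring
    rw [h0] at key1
    have := sub_eq_zero.mp key1
    exact this
  have h2 : x * e = e * x * e := by
    have h0 : (1 - e) * x * e = x * e - e * x * e := by noncomm_ring
    rw [h0] at key2
    exact (sub_eq_zero.mp key2)
  rw [h1, h2]

lemma pow_eq_pow_shift {a : R} (m d : ℕ) (hm : 1 ≤ m) (hd : 1 ≤ d)
    (hp : a ^ m = a ^ (m + d)) : ∀ c i, m ≤ i → a ^ i = a ^ (i + c * d) := by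
  have hstep : ∀ i, m ≤ i → a ^ i = a ^ (i + d) := by
    intro i hi
    have h1 : a ^ i = a ^ m * a ^ (i - m) := by rw [← pow_add]; congr 1; omega
    rw [h1, hp, ← pow_add]
    congr 1; omega
  intro c
  induction c with
  | zero => intro i _; simp
  | succ c ih =>
    intro i hi
    rw [ih i hi, hstep (i + c * d) (by omega)]
    congr 1; ring

lemma periodic_idem_pow (hper : PeriodicRing R) (a : R) :
    ∃ t : ℕ, 1 ≤ t ∧ IsIdempotentElem (a ^ t) := by
  obtain ⟨m, n, hm, hn, hmn, hp⟩ := hper a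
  have main : ∀ m n : ℕ, 1 ≤ m → m < n → a ^ m = a ^ n →
      ∃ t, 1 ≤ t ∧ IsIdempotentElem (a ^ t) := by
    intro m n hm hlt hp
    have hd1 : 1 ≤ n - m := by omega
    have hp' : a ^ m = a ^ (m + (n - m)) := by rw [hp]; congr 1; omega
    have hkey := pow_eq_pow_shift m (n - m) hm hd1 hp' m (m * (n - m))
      (Nat.le_mul_of_pos_right m (by omega))
    refine ⟨m * (n - m), Nat.mul_pos (by omega) (by omega), ?_⟩
    show a ^ (m * (n - m)) * a ^ (m * (n - m)) = a ^ (m * (n - m))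
    rw [← pow_add]
    exact hkey.symm
  rcases lt_trichotomy m n with h | h | h
  · exact main m n hm h hp
  · omega
  · exact main n m hn h hp.symm

lemma upc_of_abelian_periodic (hab : AbelianRing R) (hper : PeriodicRing R) :
    UniquelyPiClean R := by
  intro a
  obtain ⟨t, ht, hg⟩ := periodic_idem_pow hper a
  set g : R := a ^ t with hgdef
  have hs : (2 * g - 1) * (2 * g - 1) = 1 := by
    have h0 : (2 * g - 1) * (2 * g - 1) = 4 * (g * g) - 4 * g + 1 := by noncomm_ring
    rw [h0, hg]; noncomm_ring
  refine ⟨t, ht, ?_⟩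
  show ∃! e : R, IsIdempotentElem e ∧ IsUnit (a ^ t - e)
  refine ⟨1 - g, ⟨hg.one_sub, ?_⟩, ?_⟩
  · have h0 : a ^ t - (1 - g) = 2 * g - 1 := by rw [← hgdef]; noncomm_ring
    rw [h0]
    exact ⟨⟨2 * g - 1, 2 * g - 1, hs, hs⟩, rfl⟩
  · rintro h ⟨hh, hhu⟩
    have hgh : h * g = g * h := hab h hh g
    have hggh : g * (g * h) = g * h := by rw [← mul_assoc, hg]
    have hhgh : h * (g * h) = g * h := by rw [← mul_assoc, hgh, mul_assoc, hh]
    set w : R := g - h with hwdef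
    have hwu : IsUnit w := by
      have h0 : w = a ^ t - h := by rw [hwdef, hgdef]
      rw [h0]; exact hhu
    have hww : w * w = g + h - (g * h + g * h) := by
      have h0 : w * w = g * g - g * h - h * g + h * h := by rw [hwdef]; noncomm_ring
      rw [h0, hg, hh, hgh]; noncomm_ring
    have hw3 : w * (w * w) = w := by
      have e0 : w * (w * w) = g * g + g * h - (g * (g * h) + g * (g * h)) -
          (h * g + h * h - (h * (g * h) + h * (g * h))) := by
        rw [hww, hwdef]; noncomm_ring
      rw [e0, hg, hh, hgh, hggh, hhgh, hwdef]; noncomm_ring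
    obtain ⟨W, hW⟩ := hwu
    have hWin : w * ((W⁻¹ : Rˣ) : R) = 1 := by rw [← hW]; exact W.mul_inv
    have h2 : w * w = 1 := by
      calc w * w = (w * w) * (w * ((W⁻¹ : Rˣ) : R)) := by rw [hWin, mul_one]
        _ = (w * (w * w)) * ((W⁻¹ : Rˣ) : R) := by simp only [mul_assoc]
        _ = w * ((W⁻¹ : Rˣ) : R) := by rw [hw3]
        _ = 1 := hWin
    have h3 : g + h - (g * h + g * h) = 1 := by rw [← hww, h2]
    have h4 : g * h = 0 := by
      have e1 : g * (g + h - (g * h + g * h)) = g := by rw [h3, mul_one]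
      have e2 : g * (g + h - (g * h + g * h)) =
          g * g + g * h - (g * (g * h) + g * (g * h)) := by noncomm_ring
      rw [e2, hg, hggh] at e1
      have e3 : g + g * h - (g * h + g * h) = g - g * h := by noncomm_ring
      rw [e3] at e1
      exact sub_eq_self.mp e1
    have h5 : g + h = 1 := by
      rw [h4] at h3
      simpa using h3
    have := eq_sub_of_add_eq' h5
    exact this

lemma jacnil_of_periodic (hper : PeriodicRing R) :
    ∀ x ∈ (⊥ : Ideal R).jacobson, IsNilpotent x := by
  intro x hx
  obtain ⟨m, n, hm, hn, hmn, hp⟩ := hper x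
  have main : ∀ m n : ℕ, 1 ≤ m → m < n → x ^ m = x ^ n → IsNilpotent x := by
    intro m n hm hlt hp
    have hd1 : 1 ≤ n - m := by omega
    have h0 : x ^ m * (1 - x ^ (n - m)) = 0 := by
      rw [mul_sub, mul_one, ← pow_add, show m + (n - m) = n by omega, hp, sub_self]
    have hxd : x ^ (n - m) ∈ (⊥ : Ideal R).jacobson := by
      have h1 : x ^ (n - m) = x ^ (n - m - 1) * x := by rw [← pow_succ]; congr 1; omega
      rw [h1]; exact Ideal.mul_mem_left _ _ hx
    obtain ⟨V, hV⟩ := jac_unit hxd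
    have hVi : (1 - x ^ (n - m)) * ((V⁻¹ : Rˣ) : R) = 1 := by rw [← hV]; exact V.mul_inv
    refine ⟨m, ?_⟩
    calc x ^ m = x ^ m * ((1 - x ^ (n - m)) * ((V⁻¹ : Rˣ) : R)) := by rw [hVi, mul_one]
      _ = (x ^ m * (1 - x ^ (n - m))) * ((V⁻¹ : Rˣ) : R) := by rw [← mul_assoc]
      _ = 0 := by rw [h0, zero_mul]
  rcases lt_trichotomy m n with h | h | h
  · exact main m n hm h hp
  · omega
  · exact main n m hn h hp.symm


end Part2

lemma choose_dvd_aux (q k i : ℕ) (hq : 1 ≤ q) (h1 : 1 ≤ i) (hik : i ≤ k) :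
    q ∣ (q * k.factorial).choose i := by
  set M := q * k.factorial with hM
  have hM1 : 1 ≤ M := Nat.mul_pos hq (Nat.factorial_pos k)
  have hid := Nat.add_one_mul_choose_eq (M - 1) (i - 1)
  have e1 : M - 1 + 1 = M := by omega
  have e2 : i - 1 + 1 = i := by omega
  rw [e1, e2] at hid
  -- hid : M * (M-1).choose (i-1) = M.choose i * i
  obtain ⟨c, hc⟩ := Nat.dvd_factorial h1 hik
  have h2 : M.choose i * i = i * (q * (c * (M - 1).choose (i - 1))) := by
    rw [← hid, hM, hc]; ring
  have h3 : M.choose i = q * (c * (M - 1).choose (i - 1)) := by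
    apply Nat.eq_of_mul_eq_mul_left (show 0 < i by omega)
    rw [Nat.mul_comm i (M.choose i), h2]
  exact ⟨_, h3⟩

section CommPart
variable {A : Type*} [CommRing A]

lemma comm_periodic (b : A) (k : ℕ) (hk : 1 ≤ k)
    (hb : (b - b * b) ^ k = 0) (q : ℕ) (hq : 1 ≤ q) (hqA : ((q : ℕ) : A) = 0) :
    b ^ (k + q * k.factorial) = b ^ k := by
  have hMq1 : 1 ≤ q * k.factorial := Nat.mul_pos hq (Nat.factorial_pos k)
  have h0 : b ^ k * (1 - b) ^ k = 0 := by
    rw [← mul_pow]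
    have e : b * (1 - b) = b - b * b := by ring
    rw [e, hb]
  set P : A := ∑ i ∈ Finset.range k, (1 - b) ^ i with hP
  set w : A := 1 - (1 - b) ^ k with hw
  have hwP : w = b * P := by
    have hgeo := geom_sum_mul (1 - b) k
    rw [hw, hP]
    linear_combination hgeo
  have hbw : b ^ k * w = b ^ k := by
    rw [hw, mul_sub, mul_one, h0, sub_zero]
  have hbwj : ∀ j, b ^ k * w ^ j = b ^ k := by
    intro j
    induction j with
    | zero => simp
    | succ j ih => rw [pow_succ, ← mul_assoc, ih, hbw]
  set E : A := w ^ k with hE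
  have hEE : IsIdempotentElem E := by
    show E * E = E
    calc w ^ k * w ^ k = (b * P) ^ k * w ^ k := by rw [← hwP]
      _ = P ^ k * (b ^ k * w ^ k) := by rw [mul_pow]; ring
      _ = P ^ k * b ^ k := by rw [hbwj k]
      _ = w ^ k := by rw [← mul_pow, mul_comm P b, ← hwP]
  have hbE : b ^ k * E = b ^ k := hbwj k
  set ν : A := (b - 1) * E with hν
  have hνk : ν ^ k = 0 := by
    have e0 : (b - 1) * w = (-(b - b * b)) * P := by rw [hwP]; ring
    calc ν ^ k = (b - 1) ^ k * E ^ k := by rw [hν, mul_pow]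
      _ = (b - 1) ^ k * w ^ k := by rw [idem_pow hEE k hk, hE]
      _ = ((b - 1) * w) ^ k := by rw [mul_pow]
      _ = ((-(b - b * b)) * P) ^ k := by rw [e0]
      _ = (-1 : A) ^ k * ((b - b * b) ^ k * P ^ k) := by rw [mul_pow, neg_pow]; ring
      _ = 0 := by rw [hb]; ring
  have hbin : (1 + ν) ^ (q * k.factorial) = 1 := by
    rw [add_comm, add_pow]
    simp only [one_pow, mul_one]
    rw [Finset.sum_eq_single 0]
    · simp
    · intro i _ hne
      rcases lt_or_ge i k with hik | hik
      · have h1i : 1 ≤ i := Nat.one_le_iff_ne_zero.2 hne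
        obtain ⟨c, hc⟩ := choose_dvd_aux q k i hq h1i (le_of_lt hik)
        rw [hc]
        push_cast
        rw [hqA]
        ring
      · have hz : ν ^ i = 0 := by
          have e : ν ^ i = ν ^ k * ν ^ (i - k) := by rw [← pow_add]; congr 1; omega
          rw [e, hνk, zero_mul]
        rw [hz, zero_mul]
    · intro h0'
      exact absurd (Finset.mem_range.mpr (by omega)) h0'
  have e1 : (1 + ν) * E = b * E := by
    have e0 : ν * E = (b - 1) * E := by rw [hν, mul_assoc, hEE]
    calc (1 + ν) * E = E + ν * E := by ring
      _ = E + (b - 1) * E := by rw [e0]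
      _ = b * E := by ring
  have e3 : (b * E) ^ (q * k.factorial) = E := by
    rw [← e1, mul_pow, hbin, one_mul, idem_pow hEE _ hMq1]
  have hME : b ^ (q * k.factorial) * E = E := by
    conv_rhs => rw [← e3]
    rw [mul_pow, idem_pow hEE _ hMq1]
  calc b ^ (k + q * k.factorial) = b ^ k * b ^ (q * k.factorial) := by rw [pow_add]
    _ = (b ^ k * E) * b ^ (q * k.factorial) := by rw [hbE]
    _ = b ^ k * (b ^ (q * k.factorial) * E) := by ring
    _ = b ^ k * E := by rw [hME]
    _ = b ^ k := hbE

end CommPart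

section Transfer
variable {R : Type*} [Ring R]

open Polynomial in
lemma periodic_of_nilpotent (b : R) (k q : ℕ) (hk : 1 ≤ k) (hq : 1 ≤ q)
    (hb : (b - b * b) ^ k = 0) (hqR : ((q : ℕ) : R) = 0) :
    b ^ (k + q * k.factorial) = b ^ k := by
  set I : Ideal (Polynomial ℤ) :=
    Ideal.span {(X - X * X) ^ k, ((q : ℕ) : Polynomial ℤ)} with hI
  set x : Polynomial ℤ ⧸ I := Ideal.Quotient.mk I X with hx
  have hx1 : (x - x * x) ^ k = 0 := by
    rw [hx, ← map_mul, ← map_sub, ← map_pow]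
    rw [Ideal.Quotient.eq_zero_iff_mem]
    exact Ideal.subset_span (Set.mem_insert _ _)
  have hx2 : ((q : ℕ) : Polynomial ℤ ⧸ I) = 0 := by
    rw [← map_natCast (Ideal.Quotient.mk I) q, Ideal.Quotient.eq_zero_iff_mem]
    exact Ideal.subset_span (Set.mem_insert_of_mem _ rfl)
  have hfin := comm_periodic x k hk hx1 q hq hx2
  set φ : Polynomial ℤ →+* R :=
    eval₂RingHom' (Int.castRingHom R) b (fun a => Int.cast_commute a b) with hφ
  have hker : I ≤ RingHom.ker φ := by
    rw [hI, Ideal.span_le]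
    rintro z hz
    rcases hz with h | h
    · rw [h]
      simp only [SetLike.mem_coe, RingHom.mem_ker, map_pow, map_sub, map_mul]
      have hφX : φ X = b := eval₂_X _ b
      rw [hφX]
      exact hb
    · rw [Set.mem_singleton_iff] at h
      rw [h]
      simp only [SetLike.mem_coe, RingHom.mem_ker, map_natCast]
      exact hqR
  set ψ : Polynomial ℤ ⧸ I →+* R := Ideal.Quotient.lift I φ (fun a ha => RingHom.mem_ker.mp (hker ha)) with hψ
  have hψx : ψ x = b := by
    rw [hψ, hx, Ideal.Quotient.lift_mk]
    exact eval₂_X _ b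
  have := congrArg ψ hfin
  rw [map_pow, map_pow, hψx] at this
  exact this

end Transfer

theorem stmt17 {R : Type*} [Ring R] :
    (UniquelyPiClean R ∧ ∀ x ∈ (⊥ : Ideal R).jacobson, IsNilpotent x) ↔
      (AbelianRing R ∧ PeriodicRing R) := by
  constructor
  · rintro ⟨hupc, hjac⟩
    have hab := abelian_of_upc hupc
    refine ⟨hab, ?_⟩
    have key : ∀ a : R, ∃ n : ℕ, 1 ≤ n ∧ IsNilpotent (a ^ n - a ^ n * a ^ n) := by
      intro a
      obtain ⟨n, hn, hUC⟩ := hupc a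
      obtain ⟨e, ⟨he, heu⟩, huq⟩ := hUC
      refine ⟨n, hn, hjac _ ?_⟩
      have : a ^ n - a ^ n * a ^ n ∈
          sInf {J : Ideal R | (⊥ : Ideal R) ≤ J ∧ J.IsMaximal} := by
        rw [Ideal.mem_sInf]
        rintro I ⟨-, hImax⟩
        exact lemZ hab hupc he heu (fun h h1 h2 => huq h ⟨h1, h2⟩) hImax
      exact this
    -- positive "characteristic"
    obtain ⟨n2, hn2, hnil2⟩ := key 2
    set c : ℕ := 2 ^ n2 with hc
    have hc2 : 2 ≤ c := by
      calc 2 = 2 ^ 1 := (pow_one 2).symm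
        _ ≤ 2 ^ n2 := Nat.pow_le_pow_right (by omega) hn2
    have hle : c ≤ c * c := Nat.le_mul_of_pos_left c (by omega)
    have hcastnil : IsNilpotent (((c * c - c : ℕ) : R)) := by
      have e1 : ((c * c - c : ℕ) : R) = -((2 : R) ^ n2 - (2 : R) ^ n2 * (2 : R) ^ n2) := by
        rw [Nat.cast_sub hle]
        push_cast [hc]
        noncomm_ring
      rw [e1]
      exact hnil2.neg
    obtain ⟨k2, hk2⟩ := hcastnil
    set q : ℕ := (c * c - c) ^ (k2 + 1) with hq
    have hq1 : 1 ≤ q := by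
      have h2c : c * 2 ≤ c * c := Nat.mul_le_mul_left c hc2
      exact Nat.one_le_pow _ _ (by omega)
    have hqR : ((q : ℕ) : R) = 0 := by
      rw [hq, Nat.cast_pow, pow_succ, hk2, zero_mul]
    -- periodicity
    intro a
    obtain ⟨n, hn, hnila⟩ := key a
    obtain ⟨k0, hk0⟩ := hnila
    have hkk : (a ^ n - a ^ n * a ^ n) ^ (k0 + 1) = 0 := by rw [pow_succ, hk0, zero_mul]
    have hperk := periodic_of_nilpotent (a ^ n) (k0 + 1) q (by omega) hq1 hkk hqR
    have hfpos := Nat.factorial_pos (k0 + 1)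
    have hqf : 1 ≤ q * (k0 + 1).factorial := Nat.mul_pos hq1 hfpos
    refine ⟨n * ((k0 + 1) + q * (k0 + 1).factorial), n * (k0 + 1), ?_, ?_, ?_, ?_⟩
    · exact Nat.mul_pos (by omega) (by omega)
    · exact Nat.mul_pos (by omega) (by omega)
    · apply Nat.ne_of_gt
      exact (Nat.mul_lt_mul_left (show 0 < n by omega)).mpr (by omega)
    · rw [pow_mul, pow_mul, hperk]
  · rintro ⟨hab, hper⟩
    exact ⟨upc_of_abelian_periodic hab hper, jacnil_of_periodic hper⟩
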